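/- Let G be a group satisfying the weak cancellation law (WCL) and let N be a finite normal subgroup of G. Then the quotient group G/N satisfies WCL. -/

import Mathlib

/-- `G` is `Z_mon`-cofinite: for every `n ≥ 1` and `g ∈ G`, the set of `n`-th roots of `g`
is either finite or all of `G`. -/
def ZmonCofinite (G : Type*) [Group G] : Prop :=
  ∀ n : ℕ, 1 ≤ n → ∀ g : G,
    {x : G | x ^ n = g}.Finite ∨ {x : G | x ^ n = g} = Set.univ

/-- `G` satisfies the weak cancellation law: for every `n ≥ 1` the map `x ↦ x^n`
is finitely-many-to-one. -/
def WCL (G : Type*) [Group G] : Prop :=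
  ∀ n : ℕ, 1 ≤ n → ∀ a : G, {x : G | x ^ n = a}.Finite

/-- `G` is almost torsion-free: every `n`-socle `G[n]` is finite. -/
def AlmostTorsionFree (G : Type*) [Group G] : Prop :=
  ∀ n : ℕ, 1 ≤ n → {x : G | x ^ n = 1}.Finite

/-- `G` has prime exponent. -/
def HasPrimeExponent (G : Type*) [Group G] : Prop :=
  ∃ p : ℕ, p.Prime ∧ ∀ x : G, x ^ p = 1

/-- If `G` satisfies the weak cancellation law and `N` is a finite normal subgroup of `G`,
then the quotient `G/N` satisfies the weak cancellation law. -/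
theorem stmt_6 {G : Type*} [Group G] (hG : WCL G)
    (N : Subgroup G) [N.Normal] (hN : (N : Set G).Finite) :
    WCL (G ⧸ N) := by
  intro n hn a
  obtain ⟨b, rfl⟩ := QuotientGroup.mk_surjective a
  have hS : (⋃ m ∈ (N : Set G), {x : G | x ^ n = b * m}).Finite :=
    hN.biUnion (fun m _ => hG n hn (b * m))
  have hsub : {x : G ⧸ N | x ^ n = QuotientGroup.mk b} ⊆
      QuotientGroup.mk '' (⋃ m ∈ (N : Set G), {x : G | x ^ n = b * m}) := by
    rintro y hy
    obtain ⟨x, rfl⟩ := QuotientGroup.mk_surjective y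
    have : ((x ^ n)⁻¹ * b) ∈ N := by
      have := hy
      simp only [Set.mem_setOf_eq] at this
      rw [← QuotientGroup.mk_pow] at this
      exact (QuotientGroup.eq ).mp this
    refine ⟨x, Set.mem_biUnion (N.inv_mem this) ?_, rfl⟩
    simp [mul_assoc]
  exact (hS.image _).subset hsub
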